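/- Let (T⊕, T⊗) be a 3-homogeneous latin bitrade on finite sets A₁, A₂, A₃. Then T⊕ can be partitioned into three transversals, i.e., there exist pairwise disjoint transversals 𝔗₁, 𝔗₂, 𝔗₃ of T⊕ with T⊕ = 𝔗₁ ∪ 𝔗₂ ∪ 𝔗₃. -/

import Mathlib

/-- `agreeCoord r a b` says the triples `a` and `b` agree in coordinate `r`. -/
def agreeCoord {A₁ A₂ A₃ : Type*} (r : Fin 3) (a b : A₁ × A₂ × A₃) : Prop :=
  ![a.1 = b.1, a.2.1 = b.2.1, a.2.2 = b.2.2] r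

/-- A partial latin square: any two triples agreeing in two coordinates are equal. -/
def IsPLS {A₁ A₂ A₃ : Type*} (T : Set (A₁ × A₂ × A₃)) : Prop :=
  ∀ a ∈ T, ∀ b ∈ T, ∀ r s : Fin 3, r ≠ s →
    agreeCoord r a b → agreeCoord s a b → a = b

/-- A latin bitrade `(Tp, Tm)`: two disjoint partial latin squares such that for each
triple of one and each pair of coordinates there is a unique triple of the other
agreeing with it in those two coordinates. -/
structure IsBitrade {A₁ A₂ A₃ : Type*} (Tp Tm : Set (A₁ × A₂ × A₃)) : Prop where
  pls_left : IsPLS Tp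
  pls_right : IsPLS Tm
  disj : Tp ∩ Tm = ∅
  r2 : ∀ a ∈ Tp, ∀ r s : Fin 3, r ≠ s →
    ∃! b, b ∈ Tm ∧ agreeCoord r a b ∧ agreeCoord s a b
  r3 : ∀ a ∈ Tm, ∀ r s : Fin 3, r ≠ s →
    ∃! b, b ∈ Tp ∧ agreeCoord r a b ∧ agreeCoord s a b

/-- A bitrade is 3-homogeneous if each row, column and symbol occurs in exactly
3 triples of `Tp`. -/
def ThreeHomogeneous {A₁ A₂ A₃ : Type*} (Tp : Set (A₁ × A₂ × A₃)) : Prop :=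
  (∀ x : A₁, {a ∈ Tp | a.1 = x}.ncard = 3) ∧
  (∀ y : A₂, {a ∈ Tp | a.2.1 = y}.ncard = 3) ∧
  (∀ z : A₃, {a ∈ Tp | a.2.2 = z}.ncard = 3)

/-- A transversal of `T`: a subset meeting each row exactly once, each column exactly
once, and whose triples have pairwise distinct symbols. -/
def IsTransversal {A₁ A₂ A₃ : Type*} (T S : Set (A₁ × A₂ × A₃)) : Prop :=
  S ⊆ T ∧
  (∀ x : A₁, {a ∈ S | a.1 = x}.ncard = 1) ∧
  (∀ y : A₂, {a ∈ S | a.2.1 = y}.ncard = 1) ∧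
  (∀ a ∈ S, ∀ b ∈ S, a.2.2 = b.2.2 → a = b)


set_option maxHeartbeats 1000000

section Bitrade

variable {A₁ A₂ A₃ : Type*} {Tp Tm : Set (A₁ × A₂ × A₃)}

private lemma agree0 {a b : A₁ × A₂ × A₃} : agreeCoord 0 a b ↔ a.1 = b.1 := Iff.rfl
private lemma agree1 {a b : A₁ × A₂ × A₃} : agreeCoord 1 a b ↔ a.2.1 = b.2.1 := Iff.rfl
private lemma agree2 {a b : A₁ × A₂ × A₃} : agreeCoord 2 a b ↔ a.2.2 = b.2.2 := Iff.rfl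

private lemma triple_eq {a b : A₁ × A₂ × A₃} (h0 : a.1 = b.1) (h1 : a.2.1 = b.2.1)
    (h2 : a.2.2 = b.2.2) : a = b := by
  obtain ⟨x, y, z⟩ := a; obtain ⟨x', y', z'⟩ := b
  simp_all

variable (h : IsBitrade Tp Tm)

/-- partner in Tm agreeing in coords 0,1 -/
noncomputable def pb01 (u : ↥Tp) : ↥Tm :=
  ⟨(h.r2 u.1 u.2 0 1 (by decide)).exists.choose,
   (h.r2 u.1 u.2 0 1 (by decide)).exists.choose_spec.1⟩

noncomputable def pb02 (u : ↥Tp) : ↥Tm :=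
  ⟨(h.r2 u.1 u.2 0 2 (by decide)).exists.choose,
   (h.r2 u.1 u.2 0 2 (by decide)).exists.choose_spec.1⟩

noncomputable def pb12 (u : ↥Tp) : ↥Tm :=
  ⟨(h.r2 u.1 u.2 1 2 (by decide)).exists.choose,
   (h.r2 u.1 u.2 1 2 (by decide)).exists.choose_spec.1⟩

noncomputable def pa01 (v : ↥Tm) : ↥Tp :=
  ⟨(h.r3 v.1 v.2 0 1 (by decide)).exists.choose,
   (h.r3 v.1 v.2 0 1 (by decide)).exists.choose_spec.1⟩

noncomputable def pa02 (v : ↥Tm) : ↥Tp :=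
  ⟨(h.r3 v.1 v.2 0 2 (by decide)).exists.choose,
   (h.r3 v.1 v.2 0 2 (by decide)).exists.choose_spec.1⟩

noncomputable def pa12 (v : ↥Tm) : ↥Tp :=
  ⟨(h.r3 v.1 v.2 1 2 (by decide)).exists.choose,
   (h.r3 v.1 v.2 1 2 (by decide)).exists.choose_spec.1⟩

lemma pb01_spec (u : ↥Tp) : (u : A₁ × A₂ × A₃).1 = (pb01 h u : A₁ × A₂ × A₃).1 ∧
    (u : A₁ × A₂ × A₃).2.1 = (pb01 h u : A₁ × A₂ × A₃).2.1 :=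
  (h.r2 u.1 u.2 0 1 (by decide)).exists.choose_spec.2

lemma pb02_spec (u : ↥Tp) : (u : A₁ × A₂ × A₃).1 = (pb02 h u : A₁ × A₂ × A₃).1 ∧
    (u : A₁ × A₂ × A₃).2.2 = (pb02 h u : A₁ × A₂ × A₃).2.2 :=
  (h.r2 u.1 u.2 0 2 (by decide)).exists.choose_spec.2

lemma pb12_spec (u : ↥Tp) : (u : A₁ × A₂ × A₃).2.1 = (pb12 h u : A₁ × A₂ × A₃).2.1 ∧
    (u : A₁ × A₂ × A₃).2.2 = (pb12 h u : A₁ × A₂ × A₃).2.2 :=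
  (h.r2 u.1 u.2 1 2 (by decide)).exists.choose_spec.2

lemma pa01_spec (v : ↥Tm) : (v : A₁ × A₂ × A₃).1 = (pa01 h v : A₁ × A₂ × A₃).1 ∧
    (v : A₁ × A₂ × A₃).2.1 = (pa01 h v : A₁ × A₂ × A₃).2.1 :=
  (h.r3 v.1 v.2 0 1 (by decide)).exists.choose_spec.2

lemma pa02_spec (v : ↥Tm) : (v : A₁ × A₂ × A₃).1 = (pa02 h v : A₁ × A₂ × A₃).1 ∧
    (v : A₁ × A₂ × A₃).2.2 = (pa02 h v : A₁ × A₂ × A₃).2.2 :=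
  (h.r3 v.1 v.2 0 2 (by decide)).exists.choose_spec.2

lemma pa12_spec (v : ↥Tm) : (v : A₁ × A₂ × A₃).2.1 = (pa12 h v : A₁ × A₂ × A₃).2.1 ∧
    (v : A₁ × A₂ × A₃).2.2 = (pa12 h v : A₁ × A₂ × A₃).2.2 :=
  (h.r3 v.1 v.2 1 2 (by decide)).exists.choose_spec.2

/-- uniqueness characterizations -/
lemma pb01_eq {u : ↥Tp} {v : ↥Tm} (h0 : (u : A₁ × A₂ × A₃).1 = (v : A₁ × A₂ × A₃).1)
    (h1 : (u : A₁ × A₂ × A₃).2.1 = (v : A₁ × A₂ × A₃).2.1) : pb01 h u = v := by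
  have := (h.r2 u.1 u.2 0 1 (by decide)).unique
    (y₁ := ((pb01 h u : ↥Tm) : A₁ × A₂ × A₃)) (y₂ := (v : A₁ × A₂ × A₃))
    ⟨(pb01 h u).2, pb01_spec h u⟩ ⟨v.2, h0, h1⟩
  exact Subtype.ext this

lemma pb02_eq {u : ↥Tp} {v : ↥Tm} (h0 : (u : A₁ × A₂ × A₃).1 = (v : A₁ × A₂ × A₃).1)
    (h2 : (u : A₁ × A₂ × A₃).2.2 = (v : A₁ × A₂ × A₃).2.2) : pb02 h u = v := by
  have := (h.r2 u.1 u.2 0 2 (by decide)).unique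
    (y₁ := ((pb02 h u : ↥Tm) : A₁ × A₂ × A₃)) (y₂ := (v : A₁ × A₂ × A₃))
    ⟨(pb02 h u).2, pb02_spec h u⟩ ⟨v.2, h0, h2⟩
  exact Subtype.ext this

lemma pb12_eq {u : ↥Tp} {v : ↥Tm} (h1 : (u : A₁ × A₂ × A₃).2.1 = (v : A₁ × A₂ × A₃).2.1)
    (h2 : (u : A₁ × A₂ × A₃).2.2 = (v : A₁ × A₂ × A₃).2.2) : pb12 h u = v := by
  have := (h.r2 u.1 u.2 1 2 (by decide)).unique
    (y₁ := ((pb12 h u : ↥Tm) : A₁ × A₂ × A₃)) (y₂ := (v : A₁ × A₂ × A₃))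
    ⟨(pb12 h u).2, pb12_spec h u⟩ ⟨v.2, h1, h2⟩
  exact Subtype.ext this

lemma pa01_eq {v : ↥Tm} {u : ↥Tp} (h0 : (v : A₁ × A₂ × A₃).1 = (u : A₁ × A₂ × A₃).1)
    (h1 : (v : A₁ × A₂ × A₃).2.1 = (u : A₁ × A₂ × A₃).2.1) : pa01 h v = u := by
  have := (h.r3 v.1 v.2 0 1 (by decide)).unique
    (y₁ := ((pa01 h v : ↥Tp) : A₁ × A₂ × A₃)) (y₂ := (u : A₁ × A₂ × A₃))
    ⟨(pa01 h v).2, pa01_spec h v⟩ ⟨u.2, h0, h1⟩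
  exact Subtype.ext this

lemma pa02_eq {v : ↥Tm} {u : ↥Tp} (h0 : (v : A₁ × A₂ × A₃).1 = (u : A₁ × A₂ × A₃).1)
    (h2 : (v : A₁ × A₂ × A₃).2.2 = (u : A₁ × A₂ × A₃).2.2) : pa02 h v = u := by
  have := (h.r3 v.1 v.2 0 2 (by decide)).unique
    (y₁ := ((pa02 h v : ↥Tp) : A₁ × A₂ × A₃)) (y₂ := (u : A₁ × A₂ × A₃))
    ⟨(pa02 h v).2, pa02_spec h v⟩ ⟨u.2, h0, h2⟩
  exact Subtype.ext this

lemma pa12_eq {v : ↥Tm} {u : ↥Tp} (h1 : (v : A₁ × A₂ × A₃).2.1 = (u : A₁ × A₂ × A₃).2.1)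
    (h2 : (v : A₁ × A₂ × A₃).2.2 = (u : A₁ × A₂ × A₃).2.2) : pa12 h v = u := by
  have := (h.r3 v.1 v.2 1 2 (by decide)).unique
    (y₁ := ((pa12 h v : ↥Tp) : A₁ × A₂ × A₃)) (y₂ := (u : A₁ × A₂ × A₃))
    ⟨(pa12 h v).2, pa12_spec h v⟩ ⟨u.2, h1, h2⟩
  exact Subtype.ext this

end Bitrade
section Perms

variable {A₁ A₂ A₃ : Type*} {Tp Tm : Set (A₁ × A₂ × A₃)} (h : IsBitrade Tp Tm)

/-- cancellation lemmas -/
lemma pa01_pb01 (u : ↥Tp) : pa01 h (pb01 h u) = u :=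
  pa01_eq h (pb01_spec h u).1.symm (pb01_spec h u).2.symm

lemma pa02_pb02 (u : ↥Tp) : pa02 h (pb02 h u) = u :=
  pa02_eq h (pb02_spec h u).1.symm (pb02_spec h u).2.symm

lemma pa12_pb12 (u : ↥Tp) : pa12 h (pb12 h u) = u :=
  pa12_eq h (pb12_spec h u).1.symm (pb12_spec h u).2.symm

lemma pb01_pa01 (v : ↥Tm) : pb01 h (pa01 h v) = v :=
  pb01_eq h (pa01_spec h v).1.symm (pa01_spec h v).2.symm

lemma pb02_pa02 (v : ↥Tm) : pb02 h (pa02 h v) = v :=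
  pb02_eq h (pa02_spec h v).1.symm (pa02_spec h v).2.symm

lemma pb12_pa12 (v : ↥Tm) : pb12 h (pa12 h v) = v :=
  pb12_eq h (pa12_spec h v).1.symm (pa12_spec h v).2.symm

/-- ρ : rotate within a row (preserves coord 0): Tp → Tm by (0,1), Tm → Tp by (0,2). -/
noncomputable def rot1 : Equiv.Perm ↥Tp where
  toFun u := pa02 h (pb01 h u)
  invFun u := pa01 h (pb02 h u)
  left_inv u := by show pa01 h (pb02 h (pa02 h (pb01 h u))) = u; rw [pb02_pa02, pa01_pb01]
  right_inv u := by show pa02 h (pb01 h (pa01 h (pb02 h u))) = u; rw [pb01_pa01, pa02_pb02]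

/-- γ : rotate within a column (preserves coord 1): Tp → Tm by (1,2), Tm → Tp by (0,1). -/
noncomputable def rot2 : Equiv.Perm ↥Tp where
  toFun u := pa01 h (pb12 h u)
  invFun u := pa12 h (pb01 h u)
  left_inv u := by show pa12 h (pb01 h (pa01 h (pb12 h u))) = u; rw [pb01_pa01, pa12_pb12]
  right_inv u := by show pa01 h (pb12 h (pa12 h (pb01 h u))) = u; rw [pb12_pa12, pa01_pb01]

/-- σ : rotate within a symbol (preserves coord 2): Tp → Tm by (0,2), Tm → Tp by (1,2). -/
noncomputable def rot3 : Equiv.Perm ↥Tp where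
  toFun u := pa12 h (pb02 h u)
  invFun u := pa02 h (pb12 h u)
  left_inv u := by show pa02 h (pb12 h (pa12 h (pb02 h u))) = u; rw [pb12_pa12, pa02_pb02]
  right_inv u := by show pa12 h (pb02 h (pa02 h (pb12 h u))) = u; rw [pb02_pa02, pa12_pb12]

lemma rot1_fst (u : ↥Tp) : ((rot1 h u : ↥Tp) : A₁ × A₂ × A₃).1 = (u : A₁ × A₂ × A₃).1 := by
  have h1 := (pb01_spec h u).1
  have h2 := (pa02_spec h (pb01 h u)).1
  show ((pa02 h (pb01 h u) : ↥Tp) : A₁ × A₂ × A₃).1 = _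
  rw [← h2, ← h1]

lemma rot2_snd (u : ↥Tp) : ((rot2 h u : ↥Tp) : A₁ × A₂ × A₃).2.1 = (u : A₁ × A₂ × A₃).2.1 := by
  have h1 := (pb12_spec h u).1
  have h2 := (pa01_spec h (pb12 h u)).2
  show ((pa01 h (pb12 h u) : ↥Tp) : A₁ × A₂ × A₃).2.1 = _
  rw [← h2, ← h1]

lemma rot3_thd (u : ↥Tp) : ((rot3 h u : ↥Tp) : A₁ × A₂ × A₃).2.2 = (u : A₁ × A₂ × A₃).2.2 := by
  have h1 := (pb02_spec h u).2
  have h2 := (pa12_spec h (pb02 h u)).2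
  show ((pa12 h (pb02 h u) : ↥Tp) : A₁ × A₂ × A₃).2.2 = _
  rw [← h2, ← h1]

private lemma not_in_both (hd : Tp ∩ Tm = ∅) {a : A₁ × A₂ × A₃} (ha : a ∈ Tp)
    (hb : a ∈ Tm) : False := by
  have : a ∈ Tp ∩ Tm := ⟨ha, hb⟩
  rw [hd] at this
  exact this

/-- fixed-point-freeness -/
lemma rot1_ne (u : ↥Tp) : rot1 h u ≠ u := by
  intro he
  -- u = pa02 (pb01 u); then u agrees with pb01 u in coords 0,1 and 0,2, so equal
  set v := pb01 h u with hv
  have h01 := pb01_spec h u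
  have h02 := pa02_spec h v
  have heq : (u : A₁ × A₂ × A₃) = (v : A₁ × A₂ × A₃) := by
    apply triple_eq h01.1 h01.2
    have : ((rot1 h u : ↥Tp) : A₁ × A₂ × A₃).2.2 = (u : A₁ × A₂ × A₃).2.2 := by rw [he]
    calc (u : A₁ × A₂ × A₃).2.2 = ((rot1 h u : ↥Tp) : A₁ × A₂ × A₃).2.2 := this.symm
      _ = (v : A₁ × A₂ × A₃).2.2 := h02.2.symm
  exact not_in_both h.disj (heq ▸ u.2) v.2

lemma rot2_ne (u : ↥Tp) : rot2 h u ≠ u := by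
  intro he
  set v := pb12 h u with hv
  have h12 := pb12_spec h u
  have h01 := pa01_spec h v
  have heq : (u : A₁ × A₂ × A₃) = (v : A₁ × A₂ × A₃) := by
    refine triple_eq ?_ h12.1 h12.2
    have : ((rot2 h u : ↥Tp) : A₁ × A₂ × A₃).1 = (u : A₁ × A₂ × A₃).1 := by rw [he]
    calc (u : A₁ × A₂ × A₃).1 = ((rot2 h u : ↥Tp) : A₁ × A₂ × A₃).1 := this.symm
      _ = (v : A₁ × A₂ × A₃).1 := h01.1.symm
  exact not_in_both h.disj (heq ▸ u.2) v.2

lemma rot3_ne (u : ↥Tp) : rot3 h u ≠ u := by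
  intro he
  set v := pb02 h u with hv
  have h02 := pb02_spec h u
  have h12 := pa12_spec h v
  have heq : (u : A₁ × A₂ × A₃) = (v : A₁ × A₂ × A₃) := by
    refine triple_eq h02.1 ?_ h02.2
    have : ((rot3 h u : ↥Tp) : A₁ × A₂ × A₃).2.1 = (u : A₁ × A₂ × A₃).2.1 := by rw [he]
    calc (u : A₁ × A₂ × A₃).2.1 = ((rot3 h u : ↥Tp) : A₁ × A₂ × A₃).2.1 := this.symm
      _ = (v : A₁ × A₂ × A₃).2.1 := h12.1.symm
  exact not_in_both h.disj (heq ▸ u.2) v.2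

/-- The key formal identity: ρ * γ = σ⁻¹, i.e. σ = (ργ)⁻¹. -/
lemma rot1_mul_rot2 : rot1 h * rot2 h = (rot3 h)⁻¹ := by
  apply Equiv.ext
  intro u
  show rot1 h (rot2 h u) = (rot3 h).symm u
  show pa02 h (pb01 h (pa01 h (pb12 h u))) = pa02 h (pb12 h u)
  rw [pb01_pa01]

end Perms
section ThreeCycle

variable {α : Type*}

/-- A fixed-point-free permutation stabilizing a 3-element set acts on it as a 3-cycle. -/
lemma three_cycle_struct (π : Equiv.Perm α) (S : Set α) (hS : S.ncard = 3)
    (hmap : ∀ u ∈ S, π u ∈ S) (hne : ∀ u ∈ S, π u ≠ u) :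
    ∀ u ∈ S, S = {u, π u, π (π u)} ∧ π (π (π u)) = u ∧ π (π u) ≠ u := by
  have hfin : S.Finite := Set.finite_of_ncard_ne_zero (by rw [hS]; omega)
  intro u hu
  have h1 : π u ∈ S := hmap u hu
  have h2 : π (π u) ∈ S := hmap _ h1
  have n1 : π u ≠ u := hne u hu
  have n2 : π (π u) ≠ π u := hne _ h1
  have n3 : π (π u) ≠ u := by
    intro e
    have hsub : {u, π u} ⊆ S := by
      intro w hw
      simp only [Set.mem_insert_iff, Set.mem_singleton_iff] at hw
      rcases hw with rfl | rfl
      · exact hu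
      · exact h1
    have hC : (S \ {u, π u}).ncard = 1 := by
      rw [Set.ncard_diff hsub (Set.toFinite _), hS, Set.ncard_pair (Ne.symm n1)]
    obtain ⟨w, hw⟩ := Set.ncard_eq_one.mp hC
    have hwS : w ∈ S \ {u, π u} := by rw [hw]; exact rfl
    have hwmem : w ∈ S := hwS.1
    have hwne1 : w ≠ u := fun e' => hwS.2 (by simp [e'])
    have hwne2 : w ≠ π u := fun e' => hwS.2 (by simp [e'])
    have hπw : π w ∈ S \ {u, π u} := by
      refine ⟨hmap w hwmem, ?_⟩
      intro hmem
      simp only [Set.mem_insert_iff, Set.mem_singleton_iff] at hmem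
      rcases hmem with e' | e'
      · exact hwne2 (π.injective (e'.trans e.symm))
      · exact hwne1 (π.injective e')
    rw [hw, Set.mem_singleton_iff] at hπw
    exact hne w hwmem hπw
  have hsub3 : ({u, π u, π (π u)} : Set α) ⊆ S := by
    intro w hw
    simp only [Set.mem_insert_iff, Set.mem_singleton_iff] at hw
    rcases hw with rfl | rfl | rfl
    · exact hu
    · exact h1
    · exact h2
  have hcard3 : ({u, π u, π (π u)} : Set α).ncard = 3 := by
    rw [Set.ncard_insert_of_notMem (by simp [Ne.symm n1, Ne.symm n3]) (Set.toFinite _),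
      Set.ncard_pair (Ne.symm n2)]
  have hSeq : S = {u, π u, π (π u)} :=
    (Set.eq_of_subset_of_ncard_le hsub3 (by rw [hS, hcard3]) hfin).symm
  refine ⟨hSeq, ?_, n3⟩
  have h3 : π (π (π u)) ∈ S := hmap _ h2
  rw [hSeq] at h3
  simp only [Set.mem_insert_iff, Set.mem_singleton_iff] at h3
  rcases h3 with e | e | e
  · exact e
  · exact absurd (π.injective e) n3
  · exact absurd (π.injective e) n2

end ThreeCycle
section Lines

variable {A₁ A₂ A₃ : Type*} {Tp Tm : Set (A₁ × A₂ × A₃)} (h : IsBitrade Tp Tm)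

private lemma sub_ncard_row (h3 : ThreeHomogeneous Tp) (x : A₁) :
    {w : ↥Tp | (w : A₁ × A₂ × A₃).1 = x}.ncard = 3 := by
  have himg : Subtype.val '' {w : ↥Tp | (w : A₁ × A₂ × A₃).1 = x} = {a ∈ Tp | a.1 = x} := by
    ext a
    constructor
    · rintro ⟨w, hw, rfl⟩; exact ⟨w.2, hw⟩
    · rintro ⟨ha, hx⟩; exact ⟨⟨a, ha⟩, hx, rfl⟩
  rw [← h3.1 x, ← himg, Set.ncard_image_of_injective _ Subtype.val_injective]

private lemma sub_ncard_col (h3 : ThreeHomogeneous Tp) (y : A₂) :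
    {w : ↥Tp | (w : A₁ × A₂ × A₃).2.1 = y}.ncard = 3 := by
  have himg : Subtype.val '' {w : ↥Tp | (w : A₁ × A₂ × A₃).2.1 = y} = {a ∈ Tp | a.2.1 = y} := by
    ext a
    constructor
    · rintro ⟨w, hw, rfl⟩; exact ⟨w.2, hw⟩
    · rintro ⟨ha, hx⟩; exact ⟨⟨a, ha⟩, hx, rfl⟩
  rw [← h3.2.1 y, ← himg, Set.ncard_image_of_injective _ Subtype.val_injective]

private lemma sub_ncard_sym (h3 : ThreeHomogeneous Tp) (z : A₃) :
    {w : ↥Tp | (w : A₁ × A₂ × A₃).2.2 = z}.ncard = 3 := by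
  have himg : Subtype.val '' {w : ↥Tp | (w : A₁ × A₂ × A₃).2.2 = z} = {a ∈ Tp | a.2.2 = z} := by
    ext a
    constructor
    · rintro ⟨w, hw, rfl⟩; exact ⟨w.2, hw⟩
    · rintro ⟨ha, hx⟩; exact ⟨⟨a, ha⟩, hx, rfl⟩
  rw [← h3.2.2 z, ← himg, Set.ncard_image_of_injective _ Subtype.val_injective]

lemma rot1_row_struct (h3 : ThreeHomogeneous Tp) (u : ↥Tp) :
    {w : ↥Tp | (w : A₁ × A₂ × A₃).1 = (u : A₁ × A₂ × A₃).1} =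
      {u, rot1 h u, rot1 h (rot1 h u)} ∧
    rot1 h (rot1 h (rot1 h u)) = u ∧ rot1 h (rot1 h u) ≠ u := by
  refine three_cycle_struct (rot1 h) _ (sub_ncard_row h3 (u : A₁ × A₂ × A₃).1) ?_ ?_ u rfl
  · intro w hw; show ((rot1 h w : ↥Tp) : A₁ × A₂ × A₃).1 = _; rw [rot1_fst h w]; exact hw
  · intro w _; exact rot1_ne h w

lemma rot2_col_struct (h3 : ThreeHomogeneous Tp) (u : ↥Tp) :
    {w : ↥Tp | (w : A₁ × A₂ × A₃).2.1 = (u : A₁ × A₂ × A₃).2.1} =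
      {u, rot2 h u, rot2 h (rot2 h u)} ∧
    rot2 h (rot2 h (rot2 h u)) = u ∧ rot2 h (rot2 h u) ≠ u := by
  refine three_cycle_struct (rot2 h) _ (sub_ncard_col h3 (u : A₁ × A₂ × A₃).2.1) ?_ ?_ u rfl
  · intro w hw; show ((rot2 h w : ↥Tp) : A₁ × A₂ × A₃).2.1 = _; rw [rot2_snd h w]; exact hw
  · intro w _; exact rot2_ne h w

lemma rot3_sym_struct (h3 : ThreeHomogeneous Tp) (u : ↥Tp) :
    {w : ↥Tp | (w : A₁ × A₂ × A₃).2.2 = (u : A₁ × A₂ × A₃).2.2} =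
      {u, rot3 h u, rot3 h (rot3 h u)} ∧
    rot3 h (rot3 h (rot3 h u)) = u ∧ rot3 h (rot3 h u) ≠ u := by
  refine three_cycle_struct (rot3 h) _ (sub_ncard_sym h3 (u : A₁ × A₂ × A₃).2.2) ?_ ?_ u rfl
  · intro w hw; show ((rot3 h w : ↥Tp) : A₁ × A₂ × A₃).2.2 = _; rw [rot3_thd h w]; exact hw
  · intro w _; exact rot3_ne h w

lemma rot1_cube (h3 : ThreeHomogeneous Tp) : (rot1 h) ^ 3 = 1 := by
  apply Equiv.ext; intro u
  simp only [pow_succ, pow_zero, one_mul, Equiv.Perm.mul_apply, Equiv.Perm.one_apply]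
  exact (rot1_row_struct h h3 u).2.1

lemma rot2_cube (h3 : ThreeHomogeneous Tp) : (rot2 h) ^ 3 = 1 := by
  apply Equiv.ext; intro u
  simp only [pow_succ, pow_zero, one_mul, Equiv.Perm.mul_apply, Equiv.Perm.one_apply]
  exact (rot2_col_struct h h3 u).2.1

lemma rot3_cube (h3 : ThreeHomogeneous Tp) : (rot3 h) ^ 3 = 1 := by
  apply Equiv.ext; intro u
  simp only [pow_succ, pow_zero, one_mul, Equiv.Perm.mul_apply, Equiv.Perm.one_apply]
  exact (rot3_sym_struct h h3 u).2.1

lemma rot12_cube (h3 : ThreeHomogeneous Tp) : (rot1 h * rot2 h) ^ 3 = 1 := by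
  rw [rot1_mul_rot2 h, inv_pow, rot3_cube h h3, inv_one]

end Lines
section GroupPart

variable {G : Type*} [Group G]

/-- `elA ρ γ = γρ⁻¹`, `elB ρ γ = γργ` : translation generators in `Δ(3,3,3)`. -/
private def elA (ρ γ : G) : G := γ * ρ⁻¹
private def elB (ρ γ : G) : G := γ * ρ * γ

variable (ρ γ : G)

private lemma hinv_r (hρ : ρ ^ 3 = 1) : ρ⁻¹ = ρ * ρ := by
  apply inv_eq_of_mul_eq_one_right
  rw [show ρ * (ρ * ρ) = ρ ^ 3 by rw [pow_succ, pow_two]; group, hρ]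

private lemma hinv_g (hγ : γ ^ 3 = 1) : γ⁻¹ = γ * γ := hinv_r γ hγ

private lemma hinv_r2 (hρ : ρ ^ 3 = 1) : ρ⁻¹ * ρ⁻¹ = ρ := by
  rw [← mul_inv_rev, ← hinv_r ρ hρ, inv_inv]

private lemma hcube (hc : (ρ * γ) ^ 3 = 1) : (ρ * γ) * ((ρ * γ) * (ρ * γ)) = 1 := by
  rw [← hc, pow_succ, pow_two]; group

/-- k2 : ργρ = γ⁻¹ρ⁻¹γ⁻¹ -/
private lemma k2 (hc : (ρ * γ) ^ 3 = 1) : ρ * γ * ρ = γ⁻¹ * ρ⁻¹ * γ⁻¹ := by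
  have e := hcube ρ γ hc
  calc ρ * γ * ρ = (ρ * γ) * ((ρ * γ) * (ρ * γ)) * (γ⁻¹ * ρ⁻¹ * γ⁻¹) := by group
    _ = γ⁻¹ * ρ⁻¹ * γ⁻¹ := by rw [e, one_mul]

/-- k1 : γργ = ρ⁻¹γ⁻¹ρ⁻¹ -/
private lemma k1 (hc : (ρ * γ) ^ 3 = 1) : γ * ρ * γ = ρ⁻¹ * γ⁻¹ * ρ⁻¹ := by
  have e := hcube ρ γ hc
  calc γ * ρ * γ = ρ⁻¹ * ((ρ * γ) * ((ρ * γ) * (ρ * γ))) * (γ⁻¹ * ρ⁻¹) := by group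
    _ = ρ⁻¹ * 1 * (γ⁻¹ * ρ⁻¹) := by rw [e]
    _ = ρ⁻¹ * γ⁻¹ * ρ⁻¹ := by group

/-- B⁻¹ = ργρ -/
private lemma hBinv (hc : (ρ * γ) ^ 3 = 1) : (elB ρ γ)⁻¹ = ρ * γ * ρ := by
  rw [k2 ρ γ hc, elB]; group

private lemma I2 (hρ : ρ ^ 3 = 1) (hc : (ρ * γ) ^ 3 = 1) :
    ρ * elA ρ γ * ρ⁻¹ = (elB ρ γ)⁻¹ := by
  rw [hBinv ρ γ hc, elA]
  calc ρ * (γ * ρ⁻¹) * ρ⁻¹ = ρ * γ * (ρ⁻¹ * ρ⁻¹) := by group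
    _ = ρ * γ * ρ := by rw [hinv_r2 ρ hρ]

private lemma I3 (hρ : ρ ^ 3 = 1) (hγ : γ ^ 3 = 1) (hc : (ρ * γ) ^ 3 = 1) :
    ρ * elB ρ γ * ρ⁻¹ = elA ρ γ * (elB ρ γ)⁻¹ := by
  rw [hBinv ρ γ hc, elA, elB]
  calc ρ * (γ * ρ * γ) * ρ⁻¹ = (ρ * γ * ρ) * (γ * ρ⁻¹) := by group
    _ = (γ⁻¹ * ρ⁻¹ * γ⁻¹) * (γ * ρ⁻¹) := by rw [k2 ρ γ hc]
    _ = γ⁻¹ * (ρ⁻¹ * ρ⁻¹) := by group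
    _ = γ⁻¹ * ρ := by rw [hinv_r2 ρ hρ]
    _ = (γ * γ) * ρ := by rw [hinv_g γ hγ]
    _ = γ * ρ⁻¹ * (ρ * γ * ρ) := by group

private lemma I1 (hρ : ρ ^ 3 = 1) (hγ : γ ^ 3 = 1) (hc : (ρ * γ) ^ 3 = 1) :
    Commute (elA ρ γ) (elB ρ γ) := by
  show elA ρ γ * elB ρ γ = elB ρ γ * elA ρ γ
  rw [elA, elB]
  calc (γ * ρ⁻¹) * (γ * ρ * γ) = γ * ρ⁻¹ * (ρ⁻¹ * γ⁻¹ * ρ⁻¹) := by rw [k1 ρ γ hc]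
    _ = γ * (ρ⁻¹ * ρ⁻¹) * γ⁻¹ * ρ⁻¹ := by group
    _ = γ * ρ * γ⁻¹ * ρ⁻¹ := by rw [hinv_r2 ρ hρ]
    _ = γ * ρ * (γ * γ) * ρ⁻¹ := by rw [← hinv_g γ hγ]
    _ = (γ * ρ * γ) * (γ * ρ⁻¹) := by group

private lemma gamma_eq : elA ρ γ * ρ = γ := by rw [elA]; group

private lemma sigma_eq (hρ : ρ ^ 3 = 1) (hγ : γ ^ 3 = 1) (hc : (ρ * γ) ^ 3 = 1) :
    elA ρ γ * (elB ρ γ)⁻¹ * ρ = (ρ * γ)⁻¹ := by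
  rw [hBinv ρ γ hc, elA]
  calc γ * ρ⁻¹ * (ρ * γ * ρ) * ρ = (γ * γ) * (ρ * ρ) := by group
    _ = γ⁻¹ * ρ⁻¹ := by rw [← hinv_g γ hγ, ← hinv_r ρ hρ]
    _ = (ρ * γ)⁻¹ := by group

end GroupPart
section GroupPart2

variable {G : Type*} [Group G] (ρ γ : G)

private lemma conjA_zpow (hρ : ρ ^ 3 = 1) (hc : (ρ * γ) ^ 3 = 1) (m : ℤ) :
    ρ * (elA ρ γ) ^ m * ρ⁻¹ = (elB ρ γ) ^ (-m) := by
  rw [← conj_zpow, I2 ρ γ hρ hc, inv_zpow, ← zpow_neg]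

private lemma conjB_zpow (hρ : ρ ^ 3 = 1) (hγ : γ ^ 3 = 1) (hc : (ρ * γ) ^ 3 = 1) (m : ℤ) :
    ρ * (elB ρ γ) ^ m * ρ⁻¹ = (elA ρ γ) ^ m * (elB ρ γ) ^ (-m) := by
  rw [← conj_zpow, I3 ρ γ hρ hγ hc,
    ((I1 ρ γ hρ hγ hc).inv_right).mul_zpow, inv_zpow, ← zpow_neg]

private lemma ab_collect {a b : G} (hcomm : Commute a b) (m n p q : ℤ) :
    (a ^ m * b ^ n) * (a ^ p * b ^ q) = a ^ (m + p) * b ^ (n + q) := by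
  have h := (hcomm.symm.zpow_zpow n p)
  calc (a ^ m * b ^ n) * (a ^ p * b ^ q) = a ^ m * (b ^ n * a ^ p) * b ^ q := by group
    _ = a ^ m * (a ^ p * b ^ n) * b ^ q := by rw [h]
    _ = (a ^ m * a ^ p) * (b ^ n * b ^ q) := by group
    _ = a ^ (m + p) * b ^ (n + q) := by rw [← zpow_add, ← zpow_add]

private lemma conj_form (hρ : ρ ^ 3 = 1) (hγ : γ ^ 3 = 1) (hc : (ρ * γ) ^ 3 = 1)
    (s t d d' : ℤ) :
    (elA ρ γ ^ s * elB ρ γ ^ t) * (elA ρ γ ^ d * elB ρ γ ^ d' * ρ) *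
      (elA ρ γ ^ s * elB ρ γ ^ t)⁻¹ =
    elA ρ γ ^ (s + d - t) * elB ρ γ ^ (s + 2 * t + d') * ρ := by
  set A := elA ρ γ
  set B := elB ρ γ
  have cAB : Commute A B := I1 ρ γ hρ hγ hc
  calc (A ^ s * B ^ t) * (A ^ d * B ^ d' * ρ) * (A ^ s * B ^ t)⁻¹
      = (A ^ s * B ^ t) * (A ^ d * B ^ d') *
          ((ρ * B ^ (-t) * ρ⁻¹) * (ρ * A ^ (-s) * ρ⁻¹)) * ρ := by
        rw [zpow_neg, zpow_neg]; group
    _ = (A ^ s * B ^ t) * (A ^ d * B ^ d') *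
          ((A ^ (-t) * B ^ t) * B ^ s) * ρ := by
        rw [conjB_zpow ρ γ hρ hγ hc, conjA_zpow ρ γ hρ hc, neg_neg, neg_neg]
    _ = (A ^ s * B ^ t) * (A ^ d * B ^ d') * (A ^ (-t) * B ^ (t + s)) * ρ := by
        rw [mul_assoc (A ^ (-t)), ← zpow_add]
    _ = (A ^ (s + d) * B ^ (t + d')) * (A ^ (-t) * B ^ (t + s)) * ρ := by
        rw [ab_collect cAB]
    _ = (A ^ (s + d + -t) * B ^ (t + d' + (t + s))) * ρ := by rw [ab_collect cAB]
    _ = elA ρ γ ^ (s + d - t) * elB ρ γ ^ (s + 2 * t + d') * ρ := by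
        rw [show s + d + -t = s + d - t by ring, show t + d' + (t + s) = s + 2 * t + d' by ring]

private def VS (ρ γ : G) : Set G := {g | ∃ i j : ℤ, g = (elA ρ γ) ^ i * (elB ρ γ) ^ j}

private lemma VS_one : (1 : G) ∈ VS ρ γ := ⟨0, 0, by simp⟩

private lemma VS_mul (hρ : ρ ^ 3 = 1) (hγ : γ ^ 3 = 1) (hc : (ρ * γ) ^ 3 = 1)
    {g g' : G} (hg : g ∈ VS ρ γ) (hg' : g' ∈ VS ρ γ) : g * g' ∈ VS ρ γ := by
  obtain ⟨i, j, rfl⟩ := hg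
  obtain ⟨i', j', rfl⟩ := hg'
  exact ⟨i + i', j + j', (ab_collect (I1 ρ γ hρ hγ hc) i j i' j').symm ▸ rfl⟩

private lemma VS_inv (hρ : ρ ^ 3 = 1) (hγ : γ ^ 3 = 1) (hc : (ρ * γ) ^ 3 = 1)
    {g : G} (hg : g ∈ VS ρ γ) : g⁻¹ ∈ VS ρ γ := by
  obtain ⟨i, j, rfl⟩ := hg
  refine ⟨-i, -j, ?_⟩
  rw [mul_inv_rev, ← zpow_neg, ← zpow_neg]
  exact ((I1 ρ γ hρ hγ hc).symm.zpow_zpow (-j) (-i)).eq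

private lemma conjρ_VS (hρ : ρ ^ 3 = 1) (hγ : γ ^ 3 = 1) (hc : (ρ * γ) ^ 3 = 1)
    {g : G} (hg : g ∈ VS ρ γ) : ρ * g * ρ⁻¹ ∈ VS ρ γ := by
  obtain ⟨i, j, rfl⟩ := hg
  have : ρ * (elA ρ γ ^ i * elB ρ γ ^ j) * ρ⁻¹ =
      (ρ * elA ρ γ ^ i * ρ⁻¹) * (ρ * elB ρ γ ^ j * ρ⁻¹) := by group
  rw [this, conjA_zpow ρ γ hρ hc, conjB_zpow ρ γ hρ hγ hc]
  exact VS_mul ρ γ hρ hγ hc ⟨0, -i, by simp⟩ ⟨j, -j, rfl⟩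

private lemma conjρinv_VS (hρ : ρ ^ 3 = 1) (hγ : γ ^ 3 = 1) (hc : (ρ * γ) ^ 3 = 1)
    {g : G} (hg : g ∈ VS ρ γ) : ρ⁻¹ * g * ρ ∈ VS ρ γ := by
  have h2 : ρ * (ρ * g * ρ⁻¹) * ρ⁻¹ = ρ⁻¹ * g * ρ := by
    calc ρ * (ρ * g * ρ⁻¹) * ρ⁻¹ = (ρ * ρ) * g * (ρ⁻¹ * ρ⁻¹) := by group
      _ = ρ⁻¹ * g * ρ := by rw [hinv_r2 ρ hρ, ← hinv_r ρ hρ]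
  rw [← h2]
  exact conjρ_VS ρ γ hρ hγ hc (conjρ_VS ρ γ hρ hγ hc hg)

private lemma conj_zpow_VS (hρ : ρ ^ 3 = 1) (hγ : γ ^ 3 = 1) (hc : (ρ * γ) ^ 3 = 1)
    (k : ℤ) {g : G} (hg : g ∈ VS ρ γ) : ρ ^ k * g * ρ ^ (-k) ∈ VS ρ γ := by
  induction k using Int.induction_on with
  | zero => simpa using hg
  | succ n ih =>
      have e : ρ ^ ((n : ℤ) + 1) * g * ρ ^ (-((n : ℤ) + 1)) =
          ρ * (ρ ^ (n : ℤ) * g * ρ ^ (-(n : ℤ))) * ρ⁻¹ := by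
        rw [zpow_add, zpow_neg, zpow_neg, zpow_add]; group
      rw [e]
      exact conjρ_VS ρ γ hρ hγ hc ih
  | pred n ih =>
      have e : ρ ^ (-(n : ℤ) - 1) * g * ρ ^ (-(-(n : ℤ) - 1)) =
          ρ⁻¹ * (ρ ^ (-(n : ℤ)) * g * ρ ^ (-(-(n : ℤ)))) * ρ := by
        rw [show -(n : ℤ) - 1 = -(n : ℤ) + -1 by ring, zpow_add, zpow_neg, zpow_neg,
          zpow_neg, zpow_add, zpow_neg]
        group
      rw [e]
      exact conjρinv_VS ρ γ hρ hγ hc ih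

private lemma normal_form (hρ : ρ ^ 3 = 1) (hγ : γ ^ 3 = 1) (hc : (ρ * γ) ^ 3 = 1) :
    ∀ g ∈ Subgroup.closure ({ρ, γ} : Set G), ∃ v ∈ VS ρ γ, ∃ k : ℤ, g = v * ρ ^ k := by
  intro g hg
  induction hg using Subgroup.closure_induction with
  | mem x hx =>
      simp only [Set.mem_insert_iff, Set.mem_singleton_iff] at hx
      rcases hx with hxe | hxe
      · exact ⟨1, VS_one ρ γ, 1, by simp [hxe]⟩
      · refine ⟨elA ρ γ, ⟨1, 0, by simp⟩, 1, ?_⟩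
        rw [zpow_one, gamma_eq ρ γ]; exact hxe
  | one => exact ⟨1, VS_one ρ γ, 0, by simp⟩
  | mul x y _ _ ihx ihy =>
      obtain ⟨v, hv, k, rfl⟩ := ihx
      obtain ⟨v', hv', k', rfl⟩ := ihy
      refine ⟨v * (ρ ^ k * v' * ρ ^ (-k)), VS_mul ρ γ hρ hγ hc hv
        (conj_zpow_VS ρ γ hρ hγ hc k hv'), k + k', ?_⟩
      rw [zpow_add, zpow_neg]; group
  | inv x _ ihx =>
      obtain ⟨v, hv, k, rfl⟩ := ihx
      refine ⟨ρ ^ (-k) * v⁻¹ * ρ ^ (-(-k)), conj_zpow_VS ρ γ hρ hγ hc (-k)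
        (VS_inv ρ γ hρ hγ hc hv), -k, ?_⟩
      rw [mul_inv_rev, neg_neg, zpow_neg]; group

variable {X : Type*} [MulAction G X]

private lemma crux1 (hρ : ρ ^ 3 = 1) (hγ : γ ^ 3 = 1) (hc : (ρ * γ) ^ 3 = 1)
    (hfρ : ∀ x : X, ρ • x ≠ x) (hfγ : ∀ x : X, γ • x ≠ x)
    (hfσ : ∀ x : X, (ρ * γ)⁻¹ • x ≠ x)
    (i j : ℤ) (x : X) (hfix : (elA ρ γ ^ i * elB ρ γ ^ j * ρ) • x = x) : False := by
  set A := elA ρ γ with hA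
  set B := elB ρ γ with hB
  have hmod : (j - i) % 3 = 0 ∨ (j - i) % 3 = 1 ∨ (j - i) % 3 = 2 := by omega
  -- helper: from q = p * μ * p⁻¹ and q • x = x, μ has a fixed point
  have fixed : ∀ p μ : G, (p * μ * p⁻¹) • x = x → μ • (p⁻¹ • x) = p⁻¹ • x := by
    intro p μ hq
    have h1 : μ = p⁻¹ * (p * μ * p⁻¹) * p := by group
    rw [h1, mul_smul, mul_smul, smul_inv_smul, hq]
  rcases hmod with hm | hm | hm
  · -- conjugate of ρ
    set t := (j - i) / 3 with ht
    set s := i + t with hs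
    have h3t : 3 * t = j - i := by omega
    have he : A ^ i * B ^ j * ρ = (A ^ s * B ^ t) * (A ^ (0:ℤ) * B ^ (0:ℤ) * ρ) *
        (A ^ s * B ^ t)⁻¹ := by
      rw [conj_form ρ γ hρ hγ hc, show s + 0 - t = i by omega, show s + 2 * t + 0 = j by omega]
    rw [he] at hfix
    have := fixed _ _ hfix
    rw [zpow_zero, zpow_zero, one_mul, one_mul] at this
    exact hfρ _ this
  · -- conjugate of σ = (ργ)⁻¹ : d = 1, d' = -1
    set t := (j - i + 2) / 3 with ht
    set s := i + t - 1 with hs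
    have h3t : 3 * t = j - i + 2 := by omega
    have he : A ^ i * B ^ j * ρ = (A ^ s * B ^ t) * (A ^ (1:ℤ) * B ^ (-1:ℤ) * ρ) *
        (A ^ s * B ^ t)⁻¹ := by
      rw [conj_form ρ γ hρ hγ hc, show s + 1 - t = i by omega,
        show s + 2 * t + -1 = j by omega]
    rw [he] at hfix
    have := fixed _ _ hfix
    rw [zpow_one, show (-1 : ℤ) = -(1:ℤ) by ring, zpow_neg, zpow_one] at this
    rw [sigma_eq ρ γ hρ hγ hc] at this
    exact hfσ _ this
  · -- conjugate of γ : d = 1, d' = 0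
    set t := (j - i + 1) / 3 with ht
    set s := i + t - 1 with hs
    have h3t : 3 * t = j - i + 1 := by omega
    have he : A ^ i * B ^ j * ρ = (A ^ s * B ^ t) * (A ^ (1:ℤ) * B ^ (0:ℤ) * ρ) *
        (A ^ s * B ^ t)⁻¹ := by
      rw [conj_form ρ γ hρ hγ hc, show s + 1 - t = i by omega,
        show s + 2 * t + 0 = j by omega]
    rw [he] at hfix
    have := fixed _ _ hfix
    rw [zpow_one, zpow_zero, mul_one] at this
    rw [gamma_eq ρ γ] at this
    exact hfγ _ this

private lemma zpow_reduce (hρ : ρ ^ 3 = 1) (k : ℤ) (r : ℤ) (hr : k % 3 = r) :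
    ρ ^ k = ρ ^ r := by
  have h3' : ρ ^ (3 : ℤ) = 1 := by
    rw [show (3 : ℤ) = ((3 : ℕ) : ℤ) by norm_num, zpow_natCast, hρ]
  have : k = 3 * (k / 3) + r := by omega
  rw [this, zpow_add, zpow_mul, h3', one_zpow, one_mul]

private lemma crux (hρ : ρ ^ 3 = 1) (hγ : γ ^ 3 = 1) (hc : (ρ * γ) ^ 3 = 1)
    (hfρ : ∀ x : X, ρ • x ≠ x) (hfγ : ∀ x : X, γ • x ≠ x)
    (hfσ : ∀ x : X, (ρ * γ)⁻¹ • x ≠ x)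
    {v : G} (hv : v ∈ VS ρ γ) (k : ℤ) (x : X) (hfix : (v * ρ ^ k) • x = x) :
    ((k : ZMod 3) = 0) := by
  have hmod : k % 3 = 0 ∨ k % 3 = 1 ∨ k % 3 = 2 := by omega
  rcases hmod with hm | hm | hm
  · have : (3 : ℤ) ∣ k := by omega
    exact (ZMod.intCast_zmod_eq_zero_iff_dvd k 3).mpr this
  · exfalso
    obtain ⟨i, j, rfl⟩ := hv
    rw [zpow_reduce ρ hρ k 1 hm, zpow_one] at hfix
    exact crux1 ρ γ hρ hγ hc hfρ hfγ hfσ i j x hfix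
  · exfalso
    have hfix' : ((v * ρ ^ k)⁻¹) • x = x := by
      conv_lhs => rw [← hfix]
      rw [inv_smul_smul]
    have he : (v * ρ ^ k)⁻¹ = (ρ ^ (-k) * v⁻¹ * ρ ^ (-(-k))) * ρ ^ (-k) := by
      rw [mul_inv_rev, neg_neg, zpow_neg]; group
    rw [he] at hfix'
    obtain ⟨i, j, hvv⟩ := conj_zpow_VS ρ γ hρ hγ hc (-k) (VS_inv ρ γ hρ hγ hc hv)
    rw [hvv] at hfix'
    rw [zpow_reduce ρ hρ (-k) 1 (by omega), zpow_one] at hfix'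
    exact crux1 ρ γ hρ hγ hc hfρ hfγ hfσ i j x hfix'

end GroupPart2
section Coloring

variable {A₁ A₂ A₃ : Type*} {Tp Tm : Set (A₁ × A₂ × A₃)}

private def sres (h : IsBitrade Tp Tm) : Setoid ↥Tp :=
  ⟨fun y z => ∃ g ∈ Subgroup.closure ({rot1 h, rot2 h} : Set (Equiv.Perm ↥Tp)), g • z = y,
   ⟨fun y => ⟨1, Subgroup.one_mem _, one_smul _ _⟩,
    fun {y z} ⟨g, hg, he⟩ => ⟨g⁻¹, Subgroup.inv_mem _ hg, by rw [← he, inv_smul_smul]⟩,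
    fun {x y z} ⟨g, hg, he⟩ ⟨g', hg', he'⟩ =>
      ⟨g * g', Subgroup.mul_mem _ hg hg', by rw [mul_smul, he', he]⟩⟩⟩

private noncomputable def rep (h : IsBitrade Tp Tm) (y : ↥Tp) : ↥Tp :=
  (Quotient.mk (sres h) y).out

private lemma rep_rel (h : IsBitrade Tp Tm) (y : ↥Tp) : (sres h).r (rep h y) y :=
  Quotient.exact (Quotient.out_eq (Quotient.mk (sres h) y))

private lemma rep_eq_of_rel (h : IsBitrade Tp Tm) {y z : ↥Tp} (hr : (sres h).r y z) :
    rep h y = rep h z := by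
  unfold rep
  rw [Quotient.sound hr]

/-- the coloring predicate -/
private def Pcol (h : IsBitrade Tp Tm) (y : ↥Tp) (c : ZMod 3) : Prop :=
  ∃ v ∈ VS (rot1 h) (rot2 h), ∃ k : ℤ, ((k : ZMod 3) = c ∧ (v * (rot1 h) ^ k) • rep h y = y)

private lemma Pcol_exists (h : IsBitrade Tp Tm) (h3 : ThreeHomogeneous Tp) (y : ↥Tp) :
    ∃ c, Pcol h y c := by
  obtain ⟨g, hg, he⟩ := rep_rel h y
  -- g • y = rep h y, so g⁻¹ • rep h y = y
  obtain ⟨v, hv, k, hvk⟩ := normal_form (rot1 h) (rot2 h) (rot1_cube h h3) (rot2_cube h h3)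
    (rot12_cube h h3) g⁻¹ (Subgroup.inv_mem _ hg)
  refine ⟨(k : ZMod 3), v, hv, k, rfl, ?_⟩
  rw [← hvk, ← he, inv_smul_smul]

private lemma Pcol_unique (h : IsBitrade Tp Tm) (h3 : ThreeHomogeneous Tp) {y : ↥Tp}
    {c c' : ZMod 3} (h1 : Pcol h y c) (h2 : Pcol h y c') : c = c' := by
  obtain ⟨v, hv, k, hkc, hfix⟩ := h1
  obtain ⟨v', hv', k', hkc', hfix'⟩ := h2
  have hρ := rot1_cube h h3
  have hγ := rot2_cube h h3
  have hc := rot12_cube h h3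
  have hfρ : ∀ x : ↥Tp, (rot1 h) • x ≠ x := fun x => rot1_ne h x
  have hfγ : ∀ x : ↥Tp, (rot2 h) • x ≠ x := fun x => rot2_ne h x
  have hfσ : ∀ x : ↥Tp, ((rot1 h) * (rot2 h))⁻¹ • x ≠ x := by
    intro x
    rw [rot1_mul_rot2 h, inv_inv]
    exact rot3_ne h x
  -- ((v'*ρ^k')⁻¹ * (v*ρ^k)) fixes rep y
  have h5 : (v' * (rot1 h) ^ k')⁻¹ • y = rep h y := by
    conv_lhs => rw [← hfix']
    rw [inv_smul_smul]
  have hfix2 : (((v' * (rot1 h) ^ k')⁻¹ * (v * (rot1 h) ^ k))) • rep h y = rep h y := by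
    rw [mul_smul, hfix, h5]
  have he : (v' * (rot1 h) ^ k')⁻¹ * (v * (rot1 h) ^ k) =
      ((rot1 h) ^ (-k') * (v'⁻¹ * v) * (rot1 h) ^ (-(-k'))) * (rot1 h) ^ (k - k') := by
    rw [mul_inv_rev, neg_neg, zpow_neg, zpow_sub]
    group
  rw [he] at hfix2
  have hvv : (rot1 h) ^ (-k') * (v'⁻¹ * v) * (rot1 h) ^ (-(-k')) ∈ VS (rot1 h) (rot2 h) :=
    conj_zpow_VS _ _ hρ hγ hc (-k') (VS_mul _ _ hρ hγ hc (VS_inv _ _ hρ hγ hc hv') hv)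
  have := crux (rot1 h) (rot2 h) hρ hγ hc hfρ hfγ hfσ hvv (k - k') (rep h y) hfix2
  have hcast : ((k - k' : ℤ) : ZMod 3) = c - c' := by
    push_cast
    rw [hkc, hkc']
  rw [hcast] at this
  linear_combination this

private noncomputable def Fcol (h : IsBitrade Tp Tm) (h3 : ThreeHomogeneous Tp)
    (y : ↥Tp) : ZMod 3 :=
  Classical.choose (Pcol_exists h h3 y)

private lemma Fcol_spec (h : IsBitrade Tp Tm) (h3 : ThreeHomogeneous Tp) (y : ↥Tp) :
    Pcol h y (Fcol h h3 y) := Classical.choose_spec (Pcol_exists h h3 y)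

/-- generic shift lemma: if μ = w * ρ with w ∈ VS and μ ∈ closure {ρ,γ},
then Pcol (μ • y) (c+1). -/
private lemma Pcol_shift (h : IsBitrade Tp Tm) (h3 : ThreeHomogeneous Tp)
    {μ w : Equiv.Perm ↥Tp} (hw : w ∈ VS (rot1 h) (rot2 h))
    (hμw : μ = w * rot1 h)
    (hμH : μ ∈ Subgroup.closure ({rot1 h, rot2 h} : Set (Equiv.Perm ↥Tp)))
    {y : ↥Tp} {c : ZMod 3} (hP : Pcol h y c) : Pcol h (μ y) (c + 1) := by
  obtain ⟨v, hv, k, hkc, hfix⟩ := hP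
  have hρ := rot1_cube h h3
  have hγ := rot2_cube h h3
  have hc := rot12_cube h h3
  have hrep : rep h (μ y) = rep h y := by
    apply rep_eq_of_rel h
    exact ⟨μ, hμH, rfl⟩
  refine ⟨w * ((rot1 h) * v * (rot1 h)⁻¹),
    VS_mul _ _ hρ hγ hc hw (conjρ_VS _ _ hρ hγ hc hv), k + 1, ?_, ?_⟩
  · push_cast
    rw [hkc]
  · have he : (w * ((rot1 h) * v * (rot1 h)⁻¹)) * (rot1 h) ^ (k + 1) =
        μ * (v * (rot1 h) ^ k) := by
      rw [hμw, zpow_add, zpow_one]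
      group
    rw [hrep, he, mul_smul, hfix]
    rfl

private lemma Fcol_rot1 (h : IsBitrade Tp Tm) (h3 : ThreeHomogeneous Tp) (y : ↥Tp) :
    Fcol h h3 (rot1 h y) = Fcol h h3 y + 1 := by
  refine Pcol_unique h h3 (Fcol_spec h h3 _) ?_
  refine Pcol_shift h h3 (VS_one _ _) (by rw [one_mul]) ?_ (Fcol_spec h h3 y)
  exact Subgroup.subset_closure (by simp)

private lemma Fcol_rot2 (h : IsBitrade Tp Tm) (h3 : ThreeHomogeneous Tp) (y : ↥Tp) :
    Fcol h h3 (rot2 h y) = Fcol h h3 y + 1 := by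
  refine Pcol_unique h h3 (Fcol_spec h h3 _) ?_
  refine Pcol_shift h h3 (w := elA (rot1 h) (rot2 h)) ⟨1, 0, by simp⟩
    (by rw [gamma_eq]) ?_ (Fcol_spec h h3 y)
  exact Subgroup.subset_closure (by simp)

private lemma Fcol_rot3 (h : IsBitrade Tp Tm) (h3 : ThreeHomogeneous Tp) (y : ↥Tp) :
    Fcol h h3 (rot3 h y) = Fcol h h3 y + 1 := by
  refine Pcol_unique h h3 (Fcol_spec h h3 _) ?_
  have hρ := rot1_cube h h3
  have hγ := rot2_cube h h3
  have hc := rot12_cube h h3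
  have h1 : rot3 h = elA (rot1 h) (rot2 h) * (elB (rot1 h) (rot2 h))⁻¹ * rot1 h := by
    rw [sigma_eq _ _ hρ hγ hc, rot1_mul_rot2 h, inv_inv]
  refine Pcol_shift h h3 (w := elA (rot1 h) (rot2 h) * (elB (rot1 h) (rot2 h))⁻¹)
    ?_ h1 ?_ (Fcol_spec h h3 y)
  · refine VS_mul _ _ hρ hγ hc ⟨1, 0, by simp⟩ (VS_inv _ _ hρ hγ hc ⟨0, 1, by simp⟩)
  · rw [h1, elA, elB]
    have hmem : rot1 h ∈ Subgroup.closure ({rot1 h, rot2 h} : Set (Equiv.Perm ↥Tp)) :=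
      Subgroup.subset_closure (by simp)
    have hmem2 : rot2 h ∈ Subgroup.closure ({rot1 h, rot2 h} : Set (Equiv.Perm ↥Tp)) :=
      Subgroup.subset_closure (by simp)
    exact Subgroup.mul_mem _ (Subgroup.mul_mem _
      (Subgroup.mul_mem _ hmem2 (Subgroup.inv_mem _ hmem))
      (Subgroup.inv_mem _ (Subgroup.mul_mem _ (Subgroup.mul_mem _ hmem2 hmem) hmem2))) hmem

end Coloring
section Final

variable {A₁ A₂ A₃ : Type*} {Tp Tm : Set (A₁ × A₂ × A₃)}

private noncomputable def Fa (h : IsBitrade Tp Tm) (h3 : ThreeHomogeneous Tp)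
    (a : A₁ × A₂ × A₃) : ZMod 3 :=
  haveI := Classical.dec (a ∈ Tp)
  if ha : a ∈ Tp then Fcol h h3 ⟨a, ha⟩ else 0

private lemma Fa_val (h : IsBitrade Tp Tm) (h3 : ThreeHomogeneous Tp) (w : ↥Tp) :
    Fa h h3 (w : A₁ × A₂ × A₃) = Fcol h h3 w := by
  unfold Fa
  rw [dif_pos w.2, Subtype.coe_eta]

/-- exactly one element of a 3-line has a given color -/
private lemma ncard_slice (h : IsBitrade Tp Tm) (h3 : ThreeHomogeneous Tp)
    (S : Set ↥Tp) (u : ↥Tp) (π : Equiv.Perm ↥Tp)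
    (hSeq : S = {u, π u, π (π u)})
    (hshift : ∀ w : ↥Tp, Fcol h h3 (π w) = Fcol h h3 w + 1) (c : ZMod 3) :
    {w ∈ S | Fcol h h3 w = c}.ncard = 1 := by
  have f1 : Fcol h h3 (π u) = Fcol h h3 u + 1 := hshift u
  have f2 : Fcol h h3 (π (π u)) = Fcol h h3 u + 2 := by
    rw [hshift _, hshift _]; ring
  have hz : ∀ a b : ZMod 3, a = b ∨ a = b + 1 ∨ a = b + 2 := by decide
  have hne1 : ∀ a : ZMod 3, a ≠ a + 1 := by decide
  have hne2 : ∀ a : ZMod 3, a ≠ a + 2 := by decide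
  have hne3 : ∀ a : ZMod 3, a + 1 ≠ a + 2 := by decide
  have d01 : Fcol h h3 u ≠ Fcol h h3 (π u) := by rw [f1]; exact hne1 _
  have d02 : Fcol h h3 u ≠ Fcol h h3 (π (π u)) := by rw [f2]; exact hne2 _
  have d12 : Fcol h h3 (π u) ≠ Fcol h h3 (π (π u)) := by rw [f1, f2]; exact hne3 _
  have inj3 : ∀ w ∈ S, ∀ w' ∈ S, Fcol h h3 w = Fcol h h3 w' → w = w' := by
    intro w hw w' hw' he
    rw [hSeq] at hw hw'
    simp only [Set.mem_insert_iff, Set.mem_singleton_iff] at hw hw'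
    rcases hw with rfl | rfl | rfl <;> rcases hw' with rfl | rfl | rfl <;>
      first
        | rfl
        | exact absurd he d01 | exact absurd he d02 | exact absurd he d12
        | exact absurd he.symm d01 | exact absurd he.symm d02 | exact absurd he.symm d12
  have hex : ∃ w₀ ∈ S, Fcol h h3 w₀ = c := by
    rcases hz c (Fcol h h3 u) with hcc | hcc | hcc
    · exact ⟨u, by rw [hSeq]; exact Set.mem_insert _ _, hcc.symm⟩
    · refine ⟨π u, by rw [hSeq]; right; exact Set.mem_insert _ _, ?_⟩
      rw [f1, ← hcc]
    · refine ⟨π (π u), by rw [hSeq]; right; right; rfl, ?_⟩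
      rw [f2, ← hcc]
  obtain ⟨w₀, hw₀S, hw₀c⟩ := hex
  have : {w ∈ S | Fcol h h3 w = c} = {w₀} := by
    ext w
    simp only [Set.mem_setOf_eq, Set.mem_singleton_iff]
    constructor
    · rintro ⟨hwS, hwc⟩
      exact inj3 w hwS w₀ hw₀S (by rw [hwc, hw₀c])
    · rintro rfl
      exact ⟨hw₀S, hw₀c⟩
  rw [this, Set.ncard_singleton]

private lemma slice_image (h : IsBitrade Tp Tm) (h3 : ThreeHomogeneous Tp)
    (c : ZMod 3) (P : (A₁ × A₂ × A₃) → Prop) :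
    {a | (a ∈ Tp ∧ Fa h h3 a = c) ∧ P a} =
      Subtype.val '' {w : ↥Tp | (P (w : A₁ × A₂ × A₃) ∧ Fcol h h3 w = c)} := by
  ext a
  constructor
  · rintro ⟨⟨ha, hfa⟩, hP⟩
    exact ⟨⟨a, ha⟩, ⟨hP, by rw [← Fa_val h h3 ⟨a, ha⟩]; exact hfa⟩, rfl⟩
  · rintro ⟨w, ⟨hP, hfc⟩, rfl⟩
    exact ⟨⟨w.2, by rw [Fa_val h h3 w]; exact hfc⟩, hP⟩

private lemma transversal_color (h : IsBitrade Tp Tm) (h3 : ThreeHomogeneous Tp)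
    (c : ZMod 3) : IsTransversal Tp {a ∈ Tp | Fa h h3 a = c} := by
  refine ⟨fun a ha => ha.1, ?_, ?_, ?_⟩
  · -- rows
    intro x
    have hrow3 := sub_ncard_row (Tp := Tp) h3 x
    obtain ⟨u, hu⟩ := Set.nonempty_of_ncard_ne_zero (by rw [hrow3]; omega)
    have hu' : (u : A₁ × A₂ × A₃).1 = x := hu
    have hstruct := rot1_row_struct h h3 u
    have hset : {a | (a ∈ Tp ∧ Fa h h3 a = c) ∧ a.1 = x} =
        Subtype.val '' {w : ↥Tp | ((w : A₁ × A₂ × A₃).1 = x ∧ Fcol h h3 w = c)} :=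
      slice_image h h3 c (fun a => a.1 = x)
    show {a | (a ∈ Tp ∧ Fa h h3 a = c) ∧ a.1 = x}.ncard = 1
    rw [hset, Set.ncard_image_of_injective _ Subtype.val_injective]
    have hSeq : {w : ↥Tp | (w : A₁ × A₂ × A₃).1 = x} =
        {u, rot1 h u, rot1 h (rot1 h u)} := by
      rw [← hu']; exact hstruct.1
    exact ncard_slice h h3 _ u (rot1 h) hSeq (Fcol_rot1 h h3) c
  · -- columns
    intro y
    have hcol3 := sub_ncard_col (Tp := Tp) h3 y
    obtain ⟨u, hu⟩ := Set.nonempty_of_ncard_ne_zero (by rw [hcol3]; omega)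
    have hu' : (u : A₁ × A₂ × A₃).2.1 = y := hu
    have hstruct := rot2_col_struct h h3 u
    have hset : {a | (a ∈ Tp ∧ Fa h h3 a = c) ∧ a.2.1 = y} =
        Subtype.val '' {w : ↥Tp | ((w : A₁ × A₂ × A₃).2.1 = y ∧ Fcol h h3 w = c)} :=
      slice_image h h3 c (fun a => a.2.1 = y)
    show {a | (a ∈ Tp ∧ Fa h h3 a = c) ∧ a.2.1 = y}.ncard = 1
    rw [hset, Set.ncard_image_of_injective _ Subtype.val_injective]
    have hSeq : {w : ↥Tp | (w : A₁ × A₂ × A₃).2.1 = y} =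
        {u, rot2 h u, rot2 h (rot2 h u)} := by
      rw [← hu']; exact hstruct.1
    exact ncard_slice h h3 _ u (rot2 h) hSeq (Fcol_rot2 h h3) c
  · -- symbols
    rintro a ⟨ha, hfa⟩ b ⟨hb, hfb⟩ hab
    set w₁ : ↥Tp := ⟨a, ha⟩
    set w₂ : ↥Tp := ⟨b, hb⟩
    have hF1 : Fcol h h3 w₁ = c := by rw [← Fa_val h h3 w₁]; exact hfa
    have hF2 : Fcol h h3 w₂ = c := by rw [← Fa_val h h3 w₂]; exact hfb
    have hstruct := rot3_sym_struct h h3 w₁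
    have hw2mem : w₂ ∈ {w : ↥Tp | (w : A₁ × A₂ × A₃).2.2 = (w₁ : A₁ × A₂ × A₃).2.2} :=
      hab.symm
    rw [hstruct.1] at hw2mem
    have hne1 : ∀ v : ZMod 3, v ≠ v + 1 := by decide
    have hne2 : ∀ v : ZMod 3, v ≠ v + 2 := by decide
    simp only [Set.mem_insert_iff, Set.mem_singleton_iff] at hw2mem
    rcases hw2mem with he | he | he
    · exact (congrArg Subtype.val he).symm
    · exfalso
      have hcc : Fcol h h3 w₂ = Fcol h h3 w₁ + 1 := by
        rw [he]; exact Fcol_rot3 h h3 w₁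
      rw [hF1, hF2] at hcc
      exact hne1 c hcc
    · exfalso
      have hcc : Fcol h h3 w₂ = Fcol h h3 w₁ + 2 := by
        rw [he, Fcol_rot3 h h3, Fcol_rot3 h h3]; ring
      rw [hF1, hF2] at hcc
      exact hne2 c hcc

end Final
/-- Any 3-homogeneous latin bitrade can be partitioned into three transversals. -/
theorem three_homogeneous_partition_into_transversals
    {A₁ A₂ A₃ : Type*} [Finite A₁] [Finite A₂] [Finite A₃]
    (Tp Tm : Set (A₁ × A₂ × A₃)) (h : IsBitrade Tp Tm)
    (h3 : ThreeHomogeneous Tp) :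
    ∃ S₁ S₂ S₃ : Set (A₁ × A₂ × A₃),
      IsTransversal Tp S₁ ∧ IsTransversal Tp S₂ ∧ IsTransversal Tp S₃ ∧
      S₁ ∩ S₂ = ∅ ∧ S₁ ∩ S₃ = ∅ ∧ S₂ ∩ S₃ = ∅ ∧
      Tp = S₁ ∪ S₂ ∪ S₃ := by
  refine ⟨{a ∈ Tp | Fa h h3 a = 0}, {a ∈ Tp | Fa h h3 a = 1}, {a ∈ Tp | Fa h h3 a = 2},
    transversal_color h h3 0, transversal_color h h3 1, transversal_color h h3 2,
    ?_, ?_, ?_, ?_⟩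
  · ext a
    simp only [Set.mem_inter_iff, Set.mem_setOf_eq, Set.mem_empty_iff_false, iff_false]
    rintro ⟨⟨_, h0⟩, ⟨_, h1⟩⟩
    rw [h0] at h1
    exact absurd h1 (by decide)
  · ext a
    simp only [Set.mem_inter_iff, Set.mem_setOf_eq, Set.mem_empty_iff_false, iff_false]
    rintro ⟨⟨_, h0⟩, ⟨_, h1⟩⟩
    rw [h0] at h1
    exact absurd h1 (by decide)
  · ext a
    simp only [Set.mem_inter_iff, Set.mem_setOf_eq, Set.mem_empty_iff_false, iff_false]
    rintro ⟨⟨_, h0⟩, ⟨_, h1⟩⟩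
    rw [h0] at h1
    exact absurd h1 (by decide)
  · ext a
    simp only [Set.mem_union, Set.mem_setOf_eq]
    constructor
    · intro ha
      have : ∀ v : ZMod 3, v = 0 ∨ v = 1 ∨ v = 2 := by decide
      rcases this (Fa h h3 a) with hv | hv | hv
      · exact Or.inl (Or.inl ⟨ha, hv⟩)
      · exact Or.inl (Or.inr ⟨ha, hv⟩)
      · exact Or.inr ⟨ha, hv⟩
    · rintro ((⟨ha, _⟩ | ⟨ha, _⟩) | ⟨ha, _⟩) <;> exact ha
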